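/- Let H be a Hopf algebra, X a left H-module algebra, and A = X ⋊ H the smash product. If a ∈ A commutes with every element of X (viewed inside A), then for every h ∈ H the element a ◁ ad_R h := S(h₁) a h₂ also commutes with every element of X. In other words, the centralizer of X in A is invariant under the right Hopf adjoint action of H. -/

import Mathlib

open TensorProduct

noncomputable section ConvAux

variable {H A : Type*} [AddCommMonoid H] [Module ℂ H] [Coalgebra ℂ H]
  [Ring A] [Algebra ℂ A]

/-- Convolution product on linear maps from a coalgebra to an algebra. -/
def myconv (f g : H →ₗ[ℂ] A) : H →ₗ[ℂ] A :=
  LinearMap.mul' ℂ A ∘ₗ TensorProduct.map f g ∘ₗ Coalgebra.comul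

/-- Convolution unit. -/
def mycunit : H →ₗ[ℂ] A := Algebra.linearMap ℂ A ∘ₗ Coalgebra.counit

lemma myconv_repr {ι : Type*} (f g : H →ₗ[ℂ] A) (h : H) (r : Coalgebra.Repr ℂ h ι) :
    myconv f g h = ∑ i ∈ r.index, f (r.left i) * g (r.right i) := by
  simp [myconv, ← r.eq, map_sum]

lemma myconv_eq_lift (f g : H →ₗ[ℂ] A) (h : H) :
    TensorProduct.lift ((LinearMap.mul ℂ A).compl₁₂ f g) (Coalgebra.comul (R := ℂ) h)
      = myconv f g h := by
  have : TensorProduct.lift ((LinearMap.mul ℂ A).compl₁₂ f g)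
      = LinearMap.mul' ℂ A ∘ₗ TensorProduct.map f g := by
    apply TensorProduct.ext'
    intro u v
    simp
  rw [this]; rfl

lemma myconv_assoc (f g k : H →ₗ[ℂ] A) :
    myconv (myconv f g) k = myconv f (myconv g k) := by
  ext h
  set r := Coalgebra.Repr.arbitrary ℂ h
  set a₁ : (i : r.ι) → Coalgebra.Repr ℂ (r.left i) (H × H) := fun i => Coalgebra.Repr.arbitrary ℂ _
  set a₂ : (i : r.ι) → Coalgebra.Repr ℂ (r.right i) (H × H) := fun i => Coalgebra.Repr.arbitrary ℂ _
  have key := Coalgebra.sum_map_tmul_tmul_eq (R := ℂ) f g k h (repr := r) (a₁ := a₁) (a₂ := a₂)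
  apply_fun (LinearMap.mul' ℂ A ∘ₗ LinearMap.lTensor A (LinearMap.mul' ℂ A)) at key
  simp only [map_sum, LinearMap.comp_apply, LinearMap.lTensor_tmul, LinearMap.mul'_apply] at key
  rw [myconv_repr (myconv f g) k h r, myconv_repr f (myconv g k) h r]
  have L : ∑ i ∈ r.index, (myconv f g) (r.left i) * k (r.right i)
      = ∑ i ∈ r.index, ∑ j ∈ (a₁ i).index,
          f ((a₁ i).left j) * g ((a₁ i).right j) * k (r.right i) :=
    Finset.sum_congr rfl fun i _ => by rw [myconv_repr f g _ (a₁ i), Finset.sum_mul]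
  have R : ∑ i ∈ r.index, f (r.left i) * (myconv g k) (r.right i)
      = ∑ i ∈ r.index, ∑ j ∈ (a₂ i).index,
          f (r.left i) * (g ((a₂ i).left j) * k ((a₂ i).right j)) :=
    Finset.sum_congr rfl fun i _ => by rw [myconv_repr g k _ (a₂ i), Finset.mul_sum]
  rw [L, R]
  exact (Finset.sum_congr rfl fun i _ => Finset.sum_congr rfl fun j _ =>
    (mul_assoc _ _ _)).trans key.symm

lemma myconv_unit_left (f : H →ₗ[ℂ] A) : myconv mycunit f = f := by
  ext h
  set r := Coalgebra.Repr.arbitrary ℂ h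
  have key := Coalgebra.sum_counit_tmul_map_eq (R := ℂ) f h (repr := r)
  apply_fun (TensorProduct.lid ℂ A) at key
  simp only [map_sum, TensorProduct.lid_tmul, one_smul] at key
  rw [myconv_repr _ _ h r]
  simp only [mycunit, LinearMap.comp_apply, Algebra.linearMap_apply, ← Algebra.smul_def]
  simpa using key

lemma myconv_unit_right (f : H →ₗ[ℂ] A) : myconv f mycunit = f := by
  ext h
  set r := Coalgebra.Repr.arbitrary ℂ h
  have key := Coalgebra.sum_map_tmul_counit_eq (R := ℂ) f h (repr := r)
  apply_fun (TensorProduct.rid ℂ A) at key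
  simp only [map_sum, TensorProduct.rid_tmul, one_smul] at key
  rw [myconv_repr _ _ h r]
  simp only [mycunit, LinearMap.comp_apply, Algebra.linearMap_apply]
  rw [Finset.sum_congr rfl (fun i _ => by
    rw [← Algebra.commutes, ← Algebra.smul_def])]
  simpa using key

lemma myconv_mulLeft (b : A) (f g : H →ₗ[ℂ] A) :
    myconv (LinearMap.mulLeft ℂ b ∘ₗ f) g = LinearMap.mulLeft ℂ b ∘ₗ myconv f g := by
  ext h
  set r := Coalgebra.Repr.arbitrary ℂ h
  rw [LinearMap.comp_apply, LinearMap.mulLeft_apply, myconv_repr _ _ h r, myconv_repr _ _ h r,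
    Finset.mul_sum]
  exact Finset.sum_congr rfl fun i _ => by
    rw [LinearMap.comp_apply, LinearMap.mulLeft_apply, mul_assoc]

lemma myconv_mulRight (b : A) (f g : H →ₗ[ℂ] A) :
    myconv f (LinearMap.mulRight ℂ b ∘ₗ g) = LinearMap.mulRight ℂ b ∘ₗ myconv f g := by
  ext h
  set r := Coalgebra.Repr.arbitrary ℂ h
  rw [LinearMap.comp_apply, LinearMap.mulRight_apply, myconv_repr _ _ h r, myconv_repr _ _ h r,
    Finset.sum_mul]
  exact Finset.sum_congr rfl fun i _ => by
    rw [LinearMap.comp_apply, LinearMap.mulRight_apply, mul_assoc]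

/-- If `a` commutes with the image of `g`, a `mulRight a` can be pulled out of the first slot. -/
lemma myconv_mulRight_left (a : A) (f g : H →ₗ[ℂ] A) (hc : ∀ y : H, a * g y = g y * a) :
    myconv (LinearMap.mulRight ℂ a ∘ₗ f) g = LinearMap.mulRight ℂ a ∘ₗ myconv f g := by
  ext h
  set r := Coalgebra.Repr.arbitrary ℂ h
  rw [LinearMap.comp_apply, LinearMap.mulRight_apply, myconv_repr _ _ h r, myconv_repr _ _ h r,
    Finset.sum_mul]
  exact Finset.sum_congr rfl fun i _ => by
    rw [LinearMap.comp_apply, LinearMap.mulRight_apply, mul_assoc, hc, ← mul_assoc]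

end ConvAux


/-- Let `H` be a Hopf algebra over `ℂ`, `X` a left `H`-module algebra
(with action `act`), and `A = X ⋊ H` the smash product, presented here by embeddings
`ιX : X →ₐ A`, `ιH : H →ₐ A` satisfying the smash-product cross relation
`h·x = (h₁ ▷ x)·h₂`.  If `a ∈ A` commutes with every element of `X`, then for every
`h ∈ H` the element `a ◁ ad_R h = S(h₁) a h₂` also commutes with every element of `X`. -/
theorem statement0
    {H X A : Type*} [Ring H] [HopfAlgebra ℂ H]
    [Ring X] [Algebra ℂ X] [Ring A] [Algebra ℂ A]
    (act : H →ₗ[ℂ] X →ₗ[ℂ] X)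
    (ιX : X →ₐ[ℂ] A) (ιH : H →ₐ[ℂ] A)
    -- `act` makes `X` an `H`-module:
    (hact_unit : ∀ x : X, act 1 x = x)
    (hact_mul : ∀ (g h : H) (x : X), act (g * h) x = act g (act h x))
    -- `X` is an `H`-module *algebra*:  `h ▷ 1 = ε(h)1` and `h ▷ (xy) = (h₁ ▷ x)(h₂ ▷ y)`
    (hact_one : ∀ h : H, act h (1 : X) = Coalgebra.counit (R := ℂ) h • (1 : X))
    (hact_prod : ∀ (h : H) (x y : X),
      act h (x * y) =
        TensorProduct.lift ((LinearMap.mul ℂ X).compl₁₂ (act.flip x) (act.flip y))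
          (Coalgebra.comul (R := ℂ) h))
    -- smash-product cross relation `h x = (h₍₁₎ ▷ x) h₍₂₎` in `A`:
    (hcross : ∀ (h : H) (x : X),
      ιH h * ιX x =
        TensorProduct.lift ((LinearMap.mul ℂ A).compl₁₂
          (ιX.toLinearMap ∘ₗ act.flip x) ιH.toLinearMap) (Coalgebra.comul (R := ℂ) h))
    -- `a` commutes with all of `X`:
    (a : A) (ha : ∀ x : X, a * ιX x = ιX x * a) (h : H) (x : X) :
    -- then `a ◁ ad_R h = S(h₍₁₎) a h₍₂₎` commutes with all of `X`:
    TensorProduct.lift ((LinearMap.mul ℂ A).compl₁₂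
        ((LinearMap.mulRight ℂ a) ∘ₗ ιH.toLinearMap ∘ₗ (HopfAlgebra.antipode (R := ℂ)))
        ιH.toLinearMap) (Coalgebra.comul (R := ℂ) h) * ιX x
      = ιX x *
      TensorProduct.lift ((LinearMap.mul ℂ A).compl₁₂
        ((LinearMap.mulRight ℂ a) ∘ₗ ιH.toLinearMap ∘ₗ (HopfAlgebra.antipode (R := ℂ)))
        ιH.toLinearMap) (Coalgebra.comul (R := ℂ) h) := by
  set f₁ : H →ₗ[ℂ] A := ιH.toLinearMap ∘ₗ HopfAlgebra.antipode (R := ℂ) with hf₁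
  set f₂ : H →ₗ[ℂ] A := ιX.toLinearMap ∘ₗ act.flip x with hf₂
  set f₃ : H →ₗ[ℂ] A := ιH.toLinearMap with hf₃
  set F : H →ₗ[ℂ] A := LinearMap.mulRight ℂ a ∘ₗ f₁ with hF
  -- antipode identities pushed into A
  have h1 : myconv f₁ f₃ = mycunit := by
    ext g
    set r := Coalgebra.Repr.arbitrary ℂ g
    have : (myconv f₁ f₃) g
        = ιH (∑ i ∈ r.index, HopfAlgebra.antipode (R := ℂ) (r.left i) * r.right i) := by
      rw [myconv_repr _ _ g r, map_sum]
      simp [hf₁, hf₃]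
    rw [this, HopfAlgebra.sum_antipode_mul_eq_algebraMap_counit r]
    simp [mycunit]
  have h2 : myconv f₃ f₁ = mycunit := by
    ext g
    set r := Coalgebra.Repr.arbitrary ℂ g
    have : (myconv f₃ f₁) g
        = ιH (∑ i ∈ r.index, r.left i * HopfAlgebra.antipode (R := ℂ) (r.right i)) := by
      rw [myconv_repr _ _ g r, map_sum]
      simp [hf₁, hf₃]
    rw [this, HopfAlgebra.sum_mul_antipode_eq_algebraMap_counit r]
    simp [mycunit]
  -- the cross relation
  have h3 : LinearMap.mulRight ℂ (ιX x) ∘ₗ f₃ = myconv f₂ f₃ := by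
    ext g
    exact (hcross g x).symm.symm.trans (myconv_eq_lift _ _ g) |>.symm.symm
  -- unit commutes with everything
  have hRL : LinearMap.mulRight ℂ (ιX x) ∘ₗ (mycunit : H →ₗ[ℂ] A)
      = LinearMap.mulLeft ℂ (ιX x) ∘ₗ mycunit := by
    ext g
    simp [mycunit, Algebra.commutes]
  -- key lemma: ∑ S(g₁) (g₂ ▷ x) = x S(g)
  have P : myconv (myconv f₁ f₂) f₃ = LinearMap.mulRight ℂ (ιX x) ∘ₗ mycunit := by
    rw [myconv_assoc, ← h3, myconv_mulRight, h1]
  have K : myconv f₁ f₂ = LinearMap.mulLeft ℂ (ιX x) ∘ₗ f₁ := by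
    calc myconv f₁ f₂ = myconv (myconv f₁ f₂) mycunit := (myconv_unit_right _).symm
      _ = myconv (myconv f₁ f₂) (myconv f₃ f₁) := by rw [h2]
      _ = myconv (myconv (myconv f₁ f₂) f₃) f₁ := (myconv_assoc _ _ _).symm
      _ = myconv (LinearMap.mulRight ℂ (ιX x) ∘ₗ mycunit) f₁ := by rw [P]
      _ = myconv (LinearMap.mulLeft ℂ (ιX x) ∘ₗ mycunit) f₁ := by rw [hRL]
      _ = LinearMap.mulLeft ℂ (ιX x) ∘ₗ myconv mycunit f₁ := myconv_mulLeft _ _ _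
      _ = LinearMap.mulLeft ℂ (ιX x) ∘ₗ f₁ := by rw [myconv_unit_left]
  have hA : ∀ y : H, a * f₂ y = f₂ y * a := fun y => ha _
  have hcomm : LinearMap.mulRight ℂ a ∘ₗ LinearMap.mulLeft ℂ (ιX x) ∘ₗ f₁
      = LinearMap.mulLeft ℂ (ιX x) ∘ₗ F := by
    ext g
    simp [hF, mul_assoc]
  have main : LinearMap.mulRight ℂ (ιX x) ∘ₗ myconv F f₃
      = LinearMap.mulLeft ℂ (ιX x) ∘ₗ myconv F f₃ := by
    calc LinearMap.mulRight ℂ (ιX x) ∘ₗ myconv F f₃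
        = myconv F (LinearMap.mulRight ℂ (ιX x) ∘ₗ f₃) := (myconv_mulRight _ _ _).symm
      _ = myconv F (myconv f₂ f₃) := by rw [h3]
      _ = myconv (myconv F f₂) f₃ := (myconv_assoc _ _ _).symm
      _ = myconv (LinearMap.mulRight ℂ a ∘ₗ myconv f₁ f₂) f₃ := by
          rw [hF, myconv_mulRight_left a f₁ f₂ hA]
      _ = myconv (LinearMap.mulRight ℂ a ∘ₗ LinearMap.mulLeft ℂ (ιX x) ∘ₗ f₁) f₃ := by rw [K]
      _ = myconv (LinearMap.mulLeft ℂ (ιX x) ∘ₗ F) f₃ := by rw [hcomm]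
      _ = LinearMap.mulLeft ℂ (ιX x) ∘ₗ myconv F f₃ := myconv_mulLeft _ _ _
  have goal_eq : TensorProduct.lift ((LinearMap.mul ℂ A).compl₁₂
        ((LinearMap.mulRight ℂ a) ∘ₗ ιH.toLinearMap ∘ₗ (HopfAlgebra.antipode (R := ℂ)))
        ιH.toLinearMap) (Coalgebra.comul (R := ℂ) h) = myconv F f₃ h :=
    myconv_eq_lift F f₃ h
  rw [goal_eq]
  have := LinearMap.congr_fun main h
  simpa using this
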